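/- Let (P, L) be a finite projective plane of order k and let G be its incidence graph. Then every vertex v of G satisfies fun_G(v) ≥ k + 1; that is, v is not a function of any set of at most k vertices of G. -/

import Mathlib

open Classical in
/-- `v` is a function of the set `U` of vertices in the graph `G`. -/
def SimpleGraph.IsFunctionOf {V : Type*} (G : SimpleGraph V) (v : V)
    (U : Finset V) : Prop :=
  v ∉ U ∧ ∃ f : (U → Bool) → Bool, ∀ w : V, w ∉ U → w ≠ v →
    (G.Adj v w ↔ f (fun u => decide (G.Adj w u.1)) = true)

/-- The functionality of a vertex: least size of a set of which it is a function. -/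
noncomputable def SimpleGraph.vertexFun {V : Type*} (G : SimpleGraph V) (v : V) : ℕ :=
  sInf {k | ∃ U : Finset V, U.card = k ∧ G.IsFunctionOf v U}

/-- The functionality of a graph. -/
noncomputable def SimpleGraph.graphFun {V : Type*} (G : SimpleGraph V) : ℕ :=
  sSup {m | ∃ W : Set V, W.Nonempty ∧
    m = sInf {k | ∃ v : W, k = (G.induce W).vertexFun v}}

/-- The symmetric difference of a pair of distinct vertices. -/
noncomputable def SimpleGraph.sdPair {V : Type*} (G : SimpleGraph V) (u v : V) : ℕ :=
  {w | w ≠ u ∧ w ≠ v ∧ ((G.Adj w u ∧ ¬ G.Adj w v) ∨ (¬ G.Adj w u ∧ G.Adj w v))}.ncard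

/-- The symmetric difference of a graph. -/
noncomputable def SimpleGraph.sdGraph {V : Type*} (G : SimpleGraph V) : ℕ :=
  sSup {m | ∃ W : Set V, (∃ u v : W, u ≠ v) ∧
    m = sInf {k | ∃ u v : W, u ≠ v ∧ k = (G.induce W).sdPair u v}}


/-- The incidence graph of an incidence structure of points and lines. -/
def incidenceGraph (P L : Type*) [Membership P L] : SimpleGraph (P ⊕ L) where
  Adj x y :=
    match x, y with
    | Sum.inl p, Sum.inr l => p ∈ l
    | Sum.inr l, Sum.inl p => p ∈ l
    | _, _ => False
  symm := ⟨by rintro (p | l) (q | m) h <;> simp_all⟩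
  loopless := ⟨by rintro (p | l) h <;> simp_all⟩

section Aux

open Configuration Configuration.ProjectivePlane Sum Finset

open Configuration.Nondegenerate (eq_or_eq)
open scoped Classical

/-- Transfer `IsFunctionOf` along an adjacency-preserving equivalence. -/
lemma SimpleGraph.IsFunctionOf.map_equiv {V V' : Type*} (e : V ≃ V') {G : SimpleGraph V}
    {G' : SimpleGraph V'} (h : ∀ a b, G.Adj a b ↔ G'.Adj (e a) (e b)) {v : V} {U : Finset V}
    (hfn : G.IsFunctionOf v U) : G'.IsFunctionOf (e v) (U.map e.toEmbedding) := by
  classical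
  obtain ⟨hvU, f, hf⟩ := hfn
  refine ⟨by simpa using hvU, fun g => f (fun u => g ⟨e u.1, Finset.mem_map_of_mem _ u.2⟩), ?_⟩
  intro w' hw' hw'v
  have hwU : e.symm w' ∉ U := fun hw => hw' (by simpa using Finset.mem_map_of_mem e.toEmbedding hw)
  have hwv : e.symm w' ≠ v := fun hw => hw'v (by rw [← hw, e.apply_symm_apply])
  have key := hf (e.symm w') hwU hwv
  have h1 : G'.Adj (e v) w' ↔ G.Adj v (e.symm w') := by
    rw [h v (e.symm w'), e.apply_symm_apply]
  rw [h1, key]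
  have heq : (fun u : U => decide (G.Adj (e.symm w') u.1)) =
      fun u : U => decide (G'.Adj w' (e u.1)) := by
    funext u
    exact decide_eq_decide.mpr (by rw [h (e.symm w') u.1, e.apply_symm_apply])
  rw [heq]

variable {P L : Type*} [Membership P L] [Fintype P] [Fintype L]
  [Configuration.ProjectivePlane P L]

lemma card_filter_mem_line (p : P) :
    (Finset.univ.filter fun l : L => p ∈ l).card = order P L + 1 := by
  classical
  rw [← lineCount_eq L p, lineCount, Nat.card_eq_fintype_card, Fintype.card_subtype]

lemma card_filter_mem_point (l : L) :
    (Finset.univ.filter fun q : P => q ∈ l).card = order P L + 1 := by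
  classical
  rw [← pointCount_eq P l, pointCount, Nat.card_eq_fintype_card, Fintype.card_subtype]

lemma exists_good_line (x : P) (B : Finset L) (hB : B.card < order P L + 1) :
    ∃ l : L, x ∈ l ∧ l ∉ B := by
  classical
  have h := card_filter_mem_line (L := L) x
  have hns : ¬ (Finset.univ.filter fun l : L => x ∈ l) ⊆ B := fun hsub => by
    have := Finset.card_le_card hsub; omega
  obtain ⟨l, hl, hlB⟩ := Finset.not_subset.mp hns
  exact ⟨l, (Finset.mem_filter.mp hl).2, hlB⟩

lemma not_isFunctionOf_inl (k : ℕ) (hk : order P L = k) (p : P)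
    (U : Finset (P ⊕ L)) (hU : U.card ≤ k) :
    ¬ (incidenceGraph P L).IsFunctionOf (Sum.inl p) U := by
  classical
  rintro ⟨hvU, f, hf⟩
  set G := incidenceGraph P L with hG
  set UP := U.toLeft with hUPdef
  set UL := U.toRight with hULdef
  have hcard : UP.card + UL.card ≤ k := by
    rw [hUPdef, hULdef, Finset.card_toLeft_add_card_toRight]; exact hU
  have hord := one_lt_order P L
  have hk2 : 2 ≤ k := by omega
  have hqp : ∀ q ∈ UP, q ≠ p := by
    intro q hq hqe
    exact hvU (by simpa [hqe] using Finset.mem_toLeft.mp hq)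
  -- find a good line `l1` through `p`
  set mk1 : {x // x ∈ UP} → L := fun q => HasLines.mkLine (hqp q.1 q.2) with hmk1
  set B1 : Finset L := UL ∪ UP.attach.image mk1 with hB1
  have hB1card : B1.card < order P L + 1 := by
    rw [hB1]
    have h1 := Finset.card_union_le UL (UP.attach.image mk1)
    have h2 : (UP.attach.image mk1).card ≤ UP.attach.card := by exact Finset.card_image_le
    have h3 := Finset.card_attach (s := UP)
    omega
  obtain ⟨l1, hpl1, hl1B⟩ := exists_good_line p B1 hB1card
  have hl1UL : l1 ∉ UL := fun h => hl1B (Finset.mem_union_left _ h)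
  have hl1UP : ∀ q ∈ UP, q ∉ l1 := by
    intro q hq hql1
    refine hl1B (Finset.mem_union_right _ (Finset.mem_image.mpr ⟨⟨q, hq⟩, Finset.mem_attach _ _, ?_⟩))
    have hax := HasLines.mkLine_ax (L := L) (hqp q hq)
    exact (eq_or_eq hax.1 hax.2 hql1 hpl1).resolve_left (hqp q hq)
  have hl1pat : ∀ u : U, ¬ G.Adj (Sum.inr l1) u.1 := by
    rintro ⟨(q | m), hx⟩
    · exact hl1UP q (Finset.mem_toLeft.mpr hx)
    · exact fun h => h
  have hg1 : f (fun u : U => decide (G.Adj (Sum.inr l1) u.1)) = true := by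
    have hl1U : Sum.inr l1 ∉ U := fun h => hl1UL (Finset.mem_toRight.mpr h)
    exact (hf (Sum.inr l1) hl1U (by simp)).mp hpl1
  have finish : ∀ w2 : P ⊕ L, w2 ∉ U → w2 ≠ Sum.inl p → ¬ G.Adj (Sum.inl p) w2 →
      (∀ u : U, ¬ G.Adj w2 u.1) → False := by
    intro w2 hw2U hw2v hw2adj hw2pat
    have heq : (fun u : U => decide (G.Adj w2 u.1)) =
        fun u : U => decide (G.Adj (Sum.inr l1) u.1) :=
      funext fun u => decide_eq_decide.mpr (iff_of_false (hw2pat u) (hl1pat u))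
    exact hw2adj ((hf w2 hw2U hw2v).mpr (by rw [heq]; exact hg1))
  by_cases hULe : UL = ∅
  · -- pick a point `q` outside `UP ∪ {p}`
    have hcardP : Fintype.card P = k ^ 2 + k + 1 := by rw [card_points P L, hk]
    have hk2sq : k + 1 ≤ k ^ 2 := by nlinarith
    have hns : ¬ (Finset.univ : Finset P) ⊆ insert p UP := fun hsub => by
      have h1 := Finset.card_le_card hsub
      have h2 := Finset.card_insert_le p UP
      rw [Finset.card_univ, hcardP] at h1
      omega
    obtain ⟨q, -, hqB⟩ := Finset.not_subset.mp hns
    have hqp' : q ≠ p := fun h => hqB (by simp [h])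
    have hqUP : q ∉ UP := fun h => hqB (Finset.mem_insert_of_mem h)
    refine finish (Sum.inl q) (fun h => hqUP (Finset.mem_toLeft.mpr h))
      (by simp [hqp']) (fun h => h) ?_
    rintro ⟨(q' | m), hx⟩
    · exact fun h => h
    · exact absurd (hULe ▸ (Finset.mem_toRight.mpr hx : m ∈ UL)) (Finset.notMem_empty m)
  · -- pick a line `m ∈ UL`, a point `x ∈ l1` with `x ≠ p`, `x ∉ m`,
    -- and a good line `l2` through `x`
    obtain ⟨m, hm⟩ := Finset.nonempty_iff_ne_empty.mpr hULe
    have hl1m : l1 ≠ m := fun h => hl1UL (h ▸ hm)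
    have hy := HasPoints.mkPoint_ax (P := P) hl1m
    set y := HasPoints.mkPoint (P := P) hl1m with hy_def
    have hpts := card_filter_mem_point (P := P) l1
    have hns : ¬ (Finset.univ.filter fun q : P => q ∈ l1) ⊆ {p, y} := fun hsub => by
      have h1 := Finset.card_le_card hsub
      have h2 : ({p, y} : Finset P).card ≤ 2 := Finset.card_le_two
      omega
    obtain ⟨x, hx, hxpy⟩ := Finset.not_subset.mp hns
    have hxl1 : x ∈ l1 := (Finset.mem_filter.mp hx).2
    have hxp : x ≠ p := fun h => hxpy (by simp [h])
    have hxy : x ≠ y := fun h => hxpy (by simp [h])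
    have hxm : x ∉ m := fun hxm' => hxy ((eq_or_eq hxl1 hy.1 hxm' hy.2).resolve_right hl1m)
    have hqx : ∀ q ∈ UP, q ≠ x := fun q hq h => hl1UP q hq (h ▸ hxl1)
    set mk2 : {x // x ∈ UP} → L := fun q => HasLines.mkLine (hqx q.1 q.2) with hmk2
    set B2 : Finset L := insert l1 ((UL.erase m) ∪ UP.attach.image mk2) with hB2
    have hB2card : B2.card < order P L + 1 := by
      rw [hB2]
      have h0 := Finset.card_insert_le l1 ((UL.erase m) ∪ UP.attach.image mk2)
      have h1 := Finset.card_union_le (UL.erase m) (UP.attach.image mk2)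
      have h2 : (UP.attach.image mk2).card ≤ UP.attach.card := by exact Finset.card_image_le
      have h3 := Finset.card_attach (s := UP)
      have h4 := Finset.card_erase_of_mem hm
      have h5 : 1 ≤ UL.card := Finset.card_pos.mpr ⟨m, hm⟩
      omega
    obtain ⟨l2, hxl2, hl2B⟩ := exists_good_line x B2 hB2card
    have hl2l1 : l2 ≠ l1 := fun h => hl2B (by rw [h]; exact Finset.mem_insert_self _ _)
    have hpl2 : p ∉ l2 := fun h =>
      hl2l1 ((eq_or_eq h hxl2 hpl1 hxl1).resolve_left (fun e => hxp e.symm))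
    have hl2UL : l2 ∉ UL := fun h => by
      have hl2m : l2 ≠ m := fun e => hxm (e ▸ hxl2)
      exact hl2B (Finset.mem_insert_of_mem
        (Finset.mem_union_left _ (Finset.mem_erase.mpr ⟨hl2m, h⟩)))
    have hl2UP : ∀ q ∈ UP, q ∉ l2 := by
      intro q hq hql2
      refine hl2B (Finset.mem_insert_of_mem (Finset.mem_union_right _
        (Finset.mem_image.mpr ⟨⟨q, hq⟩, Finset.mem_attach _ _, ?_⟩)))
      have hax := HasLines.mkLine_ax (L := L) (hqx q hq)
      exact (eq_or_eq hax.1 hax.2 hql2 hxl2).resolve_left (hqx q hq)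
    refine finish (Sum.inr l2) (fun h => hl2UL (Finset.mem_toRight.mpr h)) (by simp) hpl2 ?_
    rintro ⟨(q | m'), hx'⟩
    · exact hl2UP q (Finset.mem_toLeft.mpr hx')
    · exact fun h => h

lemma not_isFunctionOf_inr (k : ℕ) (hk : order P L = k) (l : L)
    (U : Finset (P ⊕ L)) (hU : U.card ≤ k) :
    ¬ (incidenceGraph P L).IsFunctionOf (Sum.inr l) U := by
  intro hfn
  let e : P ⊕ L ≃ Configuration.Dual L ⊕ Configuration.Dual P := Equiv.sumComm P L
  have hadj : ∀ a b : P ⊕ L, (incidenceGraph P L).Adj a b ↔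
      (incidenceGraph (Configuration.Dual L) (Configuration.Dual P)).Adj (e a) (e b) := by
    rintro (p | l') (q | m) <;> exact Iff.rfl
  have h' := hfn.map_equiv e hadj
  exact not_isFunctionOf_inl (P := Configuration.Dual L) (L := Configuration.Dual P) k
    (by rw [Configuration.ProjectivePlane.Dual.order, hk]) l (U.map e.toEmbedding)
    (by rw [Finset.card_map]; exact hU) h'

end Aux

/-- In the incidence graph of a finite projective plane of order `k`,
every vertex has vertex functionality at least `k + 1`; equivalently, no vertex is a
function of a set of at most `k` vertices. -/
theorem vertexFun_incidenceGraph_projectivePlane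
    (P L : Type*) [Membership P L] [Fintype P] [Fintype L]
    [Configuration.ProjectivePlane P L] (k : ℕ)
    (hk : Configuration.ProjectivePlane.order P L = k) (v : P ⊕ L) :
    k + 1 ≤ (incidenceGraph P L).vertexFun v ∧
      ∀ U : Finset (P ⊕ L), U.card ≤ k → ¬ (incidenceGraph P L).IsFunctionOf v U := by
  classical
  have key : ∀ U : Finset (P ⊕ L), U.card ≤ k → ¬ (incidenceGraph P L).IsFunctionOf v U := by
    intro U hU
    cases v with
    | inl p => exact not_isFunctionOf_inl k hk p U hU
    | inr l => exact not_isFunctionOf_inr k hk l U hU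
  refine ⟨?_, key⟩
  apply le_csInf
  · refine ⟨(Finset.univ.erase v).card, Finset.univ.erase v, rfl,
      Finset.notMem_erase v _, fun _ => true, ?_⟩
    intro w hw hwv
    exact (hw (Finset.mem_erase.mpr ⟨hwv, Finset.mem_univ w⟩)).elim
  · rintro b ⟨U, hcard, hfn⟩
    by_contra hlt
    push_neg at hlt
    exact key U (by omega) hfn
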